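/- Let σ > 0 and f ∈ L₂(ℝ), and suppose D_{B,σ} ∈ L_∞[−σ,σ]. Then for every bounded measurable set E ⊂ ℝ: ∫_{−σ}^{σ} |∫_E f(t) conj(Φ_{B,σ}(t,y)) dt|² dy ≤ ‖D_{B,σ}‖_{L_∞[−σ,σ]} ∫_ℝ |∫_E f(t) e^{−iyt} dt|² dy. -/

import Mathlib

open MeasureTheory Complex Filter Real

noncomputable section

/-- Partial sums `∑_{|j|≤n} β_j B(x - jπ/σ)` of the shift series. -/
def shiftSum (B : ℝ → ℂ) (σ : ℝ) (β : ℤ → ℂ) (n : ℕ) (x : ℝ) : ℂ :=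
  ∑ j ∈ Finset.Icc (-(n : ℤ)) (n : ℤ), β j * B (x - j * π / σ)

/-- Partial sums of the series `(1/(2σ)) ∑_j B(x - jπ/σ) e^{i(jπ/σ)y}` defining `Φ_{B,σ}`. -/
def phiSum (B : ℝ → ℂ) (σ : ℝ) (n : ℕ) (x y : ℝ) : ℂ :=
  ((2 * σ : ℝ) : ℂ)⁻¹ *
    ∑ j ∈ Finset.Icc (-(n : ℤ)) (n : ℤ),
      B (x - j * π / σ) * Complex.exp (Complex.I * ((j * π / σ) * y))

/-- `Φ` is, for a.e. `x`, the `L₂[-σ,σ]`-limit (in `y`) of the shift series. -/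
def IsPhi (B : ℝ → ℂ) (σ : ℝ) (Φ : ℝ → ℝ → ℂ) : Prop :=
  ∀ᵐ x : ℝ, Tendsto (fun n : ℕ => ∫ y in Set.Ioc (-σ) σ, ‖phiSum B σ n x y - Φ x y‖ ^ 2)
    atTop (nhds 0)

/-- `Bhat` is the Plancherel (`L₂`) Fourier transform of `B`, with the normalization
`B̂(y) = (1/(2π)) ∫ B(t) e^{-ity} dt` extended from `L₁ ∩ L₂` to `L₂`. -/
def IsL2Fourier (B Bhat : ℝ → ℂ) : Prop :=
  MemLp Bhat 2 volume ∧
    Tendsto (fun n : ℕ => ∫ y : ℝ,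
      ‖((2 * π : ℝ) : ℂ)⁻¹ *
          (∫ t in (-(n : ℝ))..(n : ℝ), B t * Complex.exp (-Complex.I * (t * y))) - Bhat y‖ ^ 2)
      atTop (nhds 0)

/-- `D_{B,σ}(y) = ∑_ν |B̂(y + 2νσ)|²`. -/
def Dfun (Bhat : ℝ → ℂ) (σ : ℝ) (y : ℝ) : ℝ := ∑' ν : ℤ, ‖Bhat (y + 2 * ν * σ)‖ ^ 2

/-- Partial sums of the symbol series `∑_j β_j e^{-i(jπ/σ)y}`. -/
def symbSum (σ : ℝ) (β : ℤ → ℂ) (n : ℕ) (y : ℝ) : ℂ :=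
  ∑ j ∈ Finset.Icc (-(n : ℤ)) (n : ℤ), β j * Complex.exp (-Complex.I * ((j * π / σ) * y))

/-- The shifts `{B(· - jπ/σ)}_{j∈ℤ}` form a Bessel system with constant `C` in `L₂(ℝ)`. -/
def IsBesselShifts (B : ℝ → ℂ) (σ C : ℝ) : Prop :=
  0 < C ∧ ∀ β : ℤ → ℂ, Summable (fun j => ‖β j‖ ^ 2) →
    ∃ s : ℝ → ℂ, MemLp s 2 volume ∧
      Tendsto (fun n : ℕ => ∫ x : ℝ, ‖shiftSum B σ β n x - s x‖ ^ 2) atTop (nhds 0) ∧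
      (∫ x : ℝ, ‖s x‖ ^ 2) ≤ C * ∑' j : ℤ, ‖β j‖ ^ 2

/-- The shifts `{B(· - jπ/σ)}_{j∈ℤ}` form a Riesz system with constants `A, C` in `L₂(ℝ)`. -/
def IsRieszShifts (B : ℝ → ℂ) (σ A C : ℝ) : Prop :=
  0 < A ∧ 0 < C ∧ ∀ β : ℤ → ℂ, Summable (fun j => ‖β j‖ ^ 2) →
    ∃ s : ℝ → ℂ, MemLp s 2 volume ∧
      Tendsto (fun n : ℕ => ∫ x : ℝ, ‖shiftSum B σ β n x - s x‖ ^ 2) atTop (nhds 0) ∧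
      A * ∑' j : ℤ, ‖β j‖ ^ 2 ≤ (∫ x : ℝ, ‖s x‖ ^ 2) ∧
      (∫ x : ℝ, ‖s x‖ ^ 2) ≤ C * ∑' j : ℤ, ‖β j‖ ^ 2

/-- The space `𝕊_{B,σ,ρ}` of `L₂`-sums of shifts whose symbol vanishes a.e. on `ρ < |y| ≤ σ`. -/
def shiftSpace (B : ℝ → ℂ) (σ ρ : ℝ) : Set (ℝ → ℂ) :=
  {s | MemLp s 2 volume ∧ ∃ β : ℤ → ℂ, Summable (fun j => ‖β j‖ ^ 2) ∧
    Tendsto (fun n : ℕ => ∫ x : ℝ, ‖shiftSum B σ β n x - s x‖ ^ 2) atTop (nhds 0) ∧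
    ∃ ζ : ℝ → ℂ,
      Tendsto (fun n : ℕ => ∫ y in Set.Ioc (-σ) σ, ‖symbSum σ β n y - ζ y‖ ^ 2) atTop (nhds 0) ∧
      ∀ᵐ y : ℝ, ρ < |y| → |y| ≤ σ → ζ y = 0}

/-- `ζf = ζ_{B,σ}(f)`, i.e. `∫_{-n}^{n} f(t) conj(Φ(t,y)) dt → 2π D_{B,σ}(y) ζf(y)` in
`L₂[-σ,σ]`. -/
def IsZeta (Φ : ℝ → ℝ → ℂ) (Bhat : ℝ → ℂ) (σ : ℝ) (f ζf : ℝ → ℂ) : Prop :=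
  MemLp ζf 2 (volume.restrict (Set.Ioc (-σ) σ)) ∧
  Tendsto (fun n : ℕ => ∫ y in Set.Ioc (-σ) σ,
    ‖(∫ t in (-(n : ℝ))..(n : ℝ), f t * (starRingEnd ℂ) (Φ t y))
      - ((2 * π * Dfun Bhat σ y : ℝ) : ℂ) * ζf y‖ ^ 2) atTop (nhds 0)

/-- `Φ` agrees a.e. with the pointwise sum `∑_ν B̂(y+2νσ) e^{i(y+2νσ)x}`. -/
def IsPhiHat (Bhat : ℝ → ℂ) (σ : ℝ) (Φ : ℝ → ℝ → ℂ) : Prop :=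
  ∀ᵐ p : ℝ × ℝ, HasSum (fun ν : ℤ =>
    Bhat (p.2 + 2 * ν * σ) * Complex.exp (Complex.I * ((p.2 + 2 * ν * σ) * p.1))) (Φ p.1 p.2)


open Set
open scoped ENNReal NNReal

namespace S19


lemma norm_exp_eq_one {z : ℂ} (h : z.re = 0) : ‖Complex.exp z‖ = 1 := by
  rw [Complex.norm_exp, h, Real.exp_zero]

lemma tsum_cauchy_schwarz {a b : ℤ → ℝ} (ha0 : ∀ ν, 0 ≤ a ν) (hb0 : ∀ ν, 0 ≤ b ν)
    (ha : Summable fun ν => a ν ^ 2) (hb : Summable fun ν => b ν ^ 2) :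
    Summable (fun ν => a ν * b ν) ∧
      (∑' ν, a ν * b ν) ^ 2 ≤ (∑' ν, a ν ^ 2) * ∑' ν, b ν ^ 2 := by
  have hs : Summable (fun ν => a ν * b ν) := by
    refine Summable.of_nonneg_of_le (fun ν => mul_nonneg (ha0 ν) (hb0 ν)) (fun ν => ?_)
      ((ha.add hb).div_const 2)
    nlinarith [sq_nonneg (a ν - b ν)]
  refine ⟨hs, ?_⟩
  have hA0 : 0 ≤ ∑' ν, a ν ^ 2 := tsum_nonneg fun ν => sq_nonneg _
  have hB0 : 0 ≤ ∑' ν, b ν ^ 2 := tsum_nonneg fun ν => sq_nonneg _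
  have key : ∑' ν, a ν * b ν ≤ Real.sqrt ((∑' ν, a ν ^ 2) * ∑' ν, b ν ^ 2) := by
    refine Summable.tsum_le_of_sum_le hs fun s => ?_
    rw [Real.le_sqrt (Finset.sum_nonneg fun ν _ => mul_nonneg (ha0 ν) (hb0 ν)) (mul_nonneg hA0 hB0)]
    calc (∑ ν ∈ s, a ν * b ν) ^ 2 ≤ (∑ ν ∈ s, a ν ^ 2) * ∑ ν ∈ s, b ν ^ 2 :=
          Finset.sum_mul_sq_le_sq_mul_sq s a b
      _ ≤ (∑' ν, a ν ^ 2) * ∑' ν, b ν ^ 2 := by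
          exact mul_le_mul (Summable.sum_le_tsum s (fun ν _ => sq_nonneg _) ha)
            (Summable.sum_le_tsum s (fun ν _ => sq_nonneg _) hb)
            (Finset.sum_nonneg fun ν _ => sq_nonneg _) hA0
  have h0 : 0 ≤ ∑' ν, a ν * b ν := tsum_nonneg fun ν => mul_nonneg (ha0 ν) (hb0 ν)
  calc (∑' ν, a ν * b ν) ^ 2 ≤ Real.sqrt ((∑' ν, a ν ^ 2) * ∑' ν, b ν ^ 2) ^ 2 := by
        exact pow_le_pow_left₀ h0 key 2
    _ = _ := Real.sq_sqrt (mul_nonneg hA0 hB0)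

lemma summable_coef {σ y : ℝ} {Bhat : ℝ → ℂ} {Φ : ℝ → ℝ → ℂ}
    (h : ∀ᵐ t : ℝ, HasSum (fun ν : ℤ =>
      Bhat (y + 2 * ν * σ) * Complex.exp (Complex.I * ((y + 2 * ν * σ) * t))) (Φ t y)) :
    Summable fun ν : ℤ => ‖Bhat (y + 2 * ν * σ)‖ := by
  have hne : (MeasureTheory.ae (volume : Measure ℝ)).NeBot := by
    refine MeasureTheory.ae_neBot.2 ?_
    simp [← Measure.measure_univ_eq_zero]
  obtain ⟨t, ht⟩ := h.exists
  have h2 : Summable fun ν : ℤ => ‖Bhat (y + 2 * ν * σ) *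
      Complex.exp (Complex.I * ((y + 2 * ν * σ) * t))‖ := ht.summable.norm
  refine h2.congr fun ν => ?_
  rw [norm_mul, norm_exp_eq_one (by simp), mul_one]

lemma memℒp_comp_add_right {h : ℝ → ℂ} (hh : MemLp h 2 volume) (c : ℝ)
    (hm : AEStronglyMeasurable (fun x => h (x + c)) volume) :
    MemLp (fun x => h (x + c)) 2 volume := by
  refine ⟨hm, ?_⟩
  have : eLpNorm (fun x => h (x + c)) 2 volume = eLpNorm h 2 volume := by
    have hmap : Measure.map (fun x : ℝ => x + c) volume = volume :=
      map_add_right_eq_self volume c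
    calc eLpNorm (fun x => h (x + c)) 2 volume
        = eLpNorm (h ∘ fun x => x + c) 2 volume := rfl
      _ = eLpNorm h 2 (Measure.map (fun x : ℝ => x + c) volume) :=
          (eLpNorm_map_measure (by rw [hmap]; exact hh.1) (measurable_add_const c).aemeasurable).symm
      _ = eLpNorm h 2 volume := by rw [hmap]
  rw [this]; exact hh.2

lemma integrable_comp_add_right {h : ℝ → ℂ} (hh : Integrable h volume) (c : ℝ) :
    Integrable (fun x => h (x + c)) volume := by
  simpa using hh.comp_add_right c

lemma periodize {σ : ℝ} (hσ : 0 < σ) {q : ℝ → ℝ≥0∞} (hq : Measurable q) :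
    ∫⁻ y in Set.Ioc (-σ) σ, ∑' ν : ℤ, q (y + 2 * ν * σ) = ∫⁻ y, q y := by
  rw [lintegral_tsum (f := fun (ν : ℤ) (y : ℝ) => q (y + 2 * ν * σ))
    (fun ν => ((hq.comp (measurable_add_const (2 * (ν:ℝ) * σ))).aemeasurable))]
  have h1 : ∀ ν : ℤ, ∫⁻ y in Set.Ioc (-σ) σ, q (y + 2 * ν * σ)
      = ∫⁻ y in Set.Ioc (2 * ν * σ - σ) (2 * ν * σ + σ), q y := by
    intro ν
    set c : ℝ := 2 * ν * σ with hc
    have key := lintegral_add_right_eq_self (μ := volume)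
      (fun z => Set.indicator (Set.Ioc (c - σ) (c + σ)) q z) c
    rw [← lintegral_indicator measurableSet_Ioc (fun y => q (y + c)),
      ← lintegral_indicator measurableSet_Ioc q, ← key]
    refine lintegral_congr fun y => ?_
    by_cases hy : y ∈ Set.Ioc (-σ) σ
    · rw [Set.indicator_of_mem hy, Set.indicator_of_mem (by constructor <;>
        [linarith [hy.1]; linarith [hy.2]] : y + c ∈ Set.Ioc (c - σ) (c + σ))]
    · rw [Set.indicator_of_notMem hy, Set.indicator_of_notMem (fun hmem => hy
        ⟨by linarith [hmem.1], by linarith [hmem.2]⟩)]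
  simp_rw [h1]
  rw [← lintegral_iUnion (fun ν => measurableSet_Ioc) ?_ q]
  · have hcov : (⋃ ν : ℤ, Set.Ioc (2 * (ν:ℝ) * σ - σ) (2 * ν * σ + σ)) = Set.univ := by
      refine Set.eq_univ_of_forall fun y => Set.mem_iUnion.2 ?_
      refine ⟨⌈(y - σ) / (2 * σ)⌉, ?_, ?_⟩
      · have h := Int.ceil_lt_add_one ((y - σ) / (2 * σ))
        have h2 : ((⌈(y - σ) / (2 * σ)⌉ : ℝ)) * (2 * σ) < ((y - σ) / (2 * σ) + 1) * (2 * σ) :=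
          mul_lt_mul_of_pos_right h (by positivity)
        have h3 : (y - σ) / (2 * σ) * (2 * σ) = y - σ := by field_simp
        nlinarith
      · have h := Int.le_ceil ((y - σ) / (2 * σ))
        have h2 : ((y - σ) / (2 * σ)) * (2 * σ) ≤ (⌈(y - σ) / (2 * σ)⌉ : ℝ) * (2 * σ) :=
          mul_le_mul_of_nonneg_right h (by positivity)
        have h3 : (y - σ) / (2 * σ) * (2 * σ) = y - σ := by field_simp
        nlinarith
    rw [hcov, Measure.restrict_univ]
  · intro ν μ hνμ
    rcases lt_or_gt_of_ne hνμ with h | h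
    · refine Set.Ioc_disjoint_Ioc.2 ?_
      have : (ν:ℝ) + 1 ≤ μ := by exact_mod_cast h
      refine le_trans (min_le_left _ _) (le_trans ?_ (le_max_right _ _))
      nlinarith
    · refine Set.Ioc_disjoint_Ioc.2 ?_
      have : (μ:ℝ) + 1 ≤ ν := by exact_mod_cast h
      refine le_trans (min_le_right _ _) (le_trans ?_ (le_max_left _ _))
      nlinarith

lemma bessel_bound {σ : ℝ} (hσ : 0 < σ) {f : ℝ → ℂ} (hfm : StronglyMeasurable f)
    (hf : MemLp f 2 volume) {E : Set ℝ} (hE : MeasurableSet E)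
    (hEb : Bornology.IsBounded E) :
    ∃ C : ℝ≥0∞, C ≠ ⊤ ∧ ∀ y : ℝ,
      (∑' ν : ℤ, (‖∫ t in E, f t * Complex.exp (-Complex.I * (t * ((y + 2 * ν * σ : ℝ) : ℂ)))‖₊ : ℝ≥0∞) ^ 2)
        ≤ C := by
  have hπ : (0:ℝ) < π := Real.pi_pos
  set T : ℝ := π / σ with hTdef
  have hT : 0 < T := by positivity
  haveI : Fact (0 < T) := ⟨hT⟩
  have hTC : (T:ℂ) ≠ 0 := Complex.ofReal_ne_zero.2 hT.ne'
  -- E inside a window of K periods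
  obtain ⟨R, hR⟩ := hEb.subset_closedBall 0
  obtain ⟨K, hK⟩ := exists_nat_ge ((R + 1) / T)
  have hKT : R < (K:ℝ) * T := by
    have := (div_le_iff₀ hT).1 hK
    linarith
  have hEsub : E ⊆ Set.Ioc (-((K:ℝ) * T)) ((K:ℝ) * T) := by
    intro x hx
    have h2 := hR hx
    rw [Real.closedBall_eq_Icc, zero_sub, zero_add] at h2
    exact ⟨by linarith [h2.1], by linarith [h2.2]⟩
  -- the indicator function
  set g : ℝ → ℂ := E.indicator f with hgdef
  have hg2 : MemLp g 2 volume := hf.indicator hE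
  have hgm : StronglyMeasurable g := hfm.indicator hE
  haveI : IsFiniteMeasure (volume.restrict E) :=
    ⟨by rw [Measure.restrict_apply_univ]; exact hEb.measure_lt_top⟩
  have hgL1 : Integrable g volume :=
    (integrable_indicator_iff hE).2 ((hf.restrict E).integrable one_le_two)
  set nn : ℕ := 2 * K + 1 with hnn
  refine ⟨ENNReal.ofReal (T * ((nn:ℝ) ^ 2 * ∫ x, ‖g x‖ ^ 2)), ENNReal.ofReal_ne_top, fun y => ?_⟩
  -- the modulated function h and its periodization H
  set h : ℝ → ℂ := fun t => g t * Complex.exp (-Complex.I * (t * y)) with hhdef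
  have hnorm_h : ∀ t, ‖h t‖ = ‖g t‖ := fun t => by
    rw [hhdef, norm_mul, norm_exp_eq_one (by simp), mul_one]
  have hexp_cont : Continuous fun t : ℝ => Complex.exp (-Complex.I * (t * y)) := by fun_prop
  have hhm : StronglyMeasurable h := hgm.mul hexp_cont.stronglyMeasurable
  have hh2 : MemLp h 2 volume :=
    hg2.of_le hhm.aestronglyMeasurable (Eventually.of_forall fun t => le_of_eq (hnorm_h t))
  have hh1 : Integrable h volume :=
    hgL1.norm.mono' hhm.aestronglyMeasurable (Eventually.of_forall fun t => le_of_eq (hnorm_h t))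
  set m : ℕ → ℝ := fun i => (i : ℝ) - K with hm
  have htrans2 : ∀ c : ℝ, MemLp (fun s => h (s + c)) 2 volume := fun c =>
    memℒp_comp_add_right hh2 c
      ((hhm.comp_measurable (measurable_add_const c)).aestronglyMeasurable)
  have htrans1 : ∀ c : ℝ, Integrable (fun s => h (s + c)) volume := fun c => by
    simpa using hh1.comp_add_right c
  set H : ℝ → ℂ := fun s => ∑ i ∈ Finset.range nn, h (s + m i * T) with hH
  have hHm : StronglyMeasurable H :=
    Finset.stronglyMeasurable_fun_sum _ fun i _ => hhm.comp_measurable (measurable_add_const _)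
  have hH2 : MemLp H 2 volume := memLp_finset_sum _ fun i _ => htrans2 (m i * T)
  -- lift to the circle
  set HL : AddCircle T → ℂ := AddCircle.liftIoc T 0 H with hHL
  have hHLm : StronglyMeasurable HL :=
    (hHm.comp_measurable measurable_subtype_coe).comp_measurable
      (AddCircle.measurableEquivIoc T 0).measurable
  have hHL_mk : ∀ᵐ x : ℝ ∂(volume.restrict (Set.Ioc (0:ℝ) (0 + T))), HL (x : AddCircle T) = H x :=
    (ae_restrict_iff' measurableSet_Ioc).2 (Eventually.of_forall fun x hx =>
      AddCircle.liftIoc_coe_apply hx)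
  have hvol_map : (volume : Measure (AddCircle T)) =
      Measure.map ((↑) : ℝ → AddCircle T) (volume.restrict (Set.Ioc (0:ℝ) (0 + T))) :=
    (AddCircle.measurePreserving_mk T 0).map_eq.symm
  have he1 : eLpNorm HL 2 (volume : Measure (AddCircle T))
      = eLpNorm H 2 (volume.restrict (Set.Ioc (0:ℝ) (0 + T))) := by
    rw [hvol_map, eLpNorm_map_measure (by rw [← hvol_map]; exact hHLm.aestronglyMeasurable)
      AddCircle.measurable_mk'.aemeasurable]
    exact eLpNorm_congr_ae hHL_mk
  have hHL2 : MemLp HL 2 (AddCircle.haarAddCircle) := by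
    refine ⟨hHLm.aestronglyMeasurable, ?_⟩
    have hv : eLpNorm HL 2 (volume : Measure (AddCircle T)) < ⊤ := by
      rw [he1]; exact (hH2.restrict _).2
    rw [AddCircle.volume_eq_smul_haarAddCircle,
      eLpNorm_smul_measure_of_ne_zero (by simp [hT] : ENNReal.ofReal T ≠ 0)] at hv
    have hfac : (ENNReal.ofReal T) ^ ((1:ℝ≥0∞) / 2).toReal ≠ 0 := by
      simp [ENNReal.rpow_eq_zero_iff, hT, hT.not_ge]
    by_contra hX
    rw [not_lt, top_le_iff] at hX
    rw [hX, smul_eq_mul, ENNReal.mul_top hfac] at hv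
    exact absurd hv (lt_irrefl _)
  -- Parseval setup
  set HLp : Lp ℂ 2 (@AddCircle.haarAddCircle T _) := hHL2.toLp HL with hHLp
  have hcoe : ⇑HLp =ᵐ[AddCircle.haarAddCircle] HL := hHL2.coeFn_toLp
  have hpars := tsum_sq_fourierCoeff HLp
  have hcoeff_eq : ∀ ν : ℤ, fourierCoeff (⇑HLp) ν = fourierCoeff HL ν := by
    intro ν
    rw [fourierCoeff, fourierCoeff]
    exact integral_congr_ae (hcoe.mono fun x hx => by simp only [hx])
  have hsum_coeff : Summable fun ν : ℤ => ‖fourierCoeff (⇑HLp) ν‖ ^ 2 := by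
    have h1 := ((lp.memℓp (fourierBasis.repr HLp)).summable
      (by norm_num : 0 < (2:ℝ≥0∞).toReal))
    refine h1.congr fun ν => ?_
    rw [fourierBasis_repr, show ((2:ℝ≥0∞).toReal) = ((2:ℕ):ℝ) by norm_num, Real.rpow_natCast]
  -- the main coefficient computation
  have hmain : ∀ ν : ℤ, (∫ x in (0:ℝ)..T, fourier (-ν) (x : AddCircle T) • H x)
      = ∫ t in E, f t * Complex.exp (-Complex.I * (t * ((y + 2 * ν * σ : ℝ) : ℂ))) := by
    intro ν
    set e : ℝ → ℂ := fun x : ℝ =>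
      Complex.exp (2 * (π:ℂ) * Complex.I * ((-ν : ℤ) : ℂ) * (x:ℂ) / (T:ℂ)) with he
    have he_eq : ∀ x : ℝ, fourier (-ν) (x : AddCircle T) = e x := fun x => fourier_coe_apply
    have he_norm : ∀ x : ℝ, ‖e x‖ = 1 := by
      intro x
      show ‖Complex.exp (2 * (π:ℂ) * Complex.I * ((-ν : ℤ) : ℂ) * (x:ℂ) / (T:ℂ))‖ = 1
      have harg : 2 * (π:ℂ) * Complex.I * ((-ν : ℤ) : ℂ) * (x:ℂ) / (T:ℂ)
          = ((2 * π * (-ν : ℤ) * x / T : ℝ) : ℂ) * Complex.I := by push_cast; ring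
      rw [harg]
      exact norm_exp_eq_one (by simp)
    have he_per : ∀ (x : ℝ) (k : ℤ), e (x + k * T) = e x := by
      intro x k
      show Complex.exp (2 * (π:ℂ) * Complex.I * ((-ν : ℤ) : ℂ) * ((x + (k:ℝ) * T : ℝ) : ℂ) / (T:ℂ))
        = Complex.exp (2 * (π:ℂ) * Complex.I * ((-ν : ℤ) : ℂ) * (x:ℂ) / (T:ℂ))
      have harg : 2 * (π:ℂ) * Complex.I * ((-ν : ℤ) : ℂ) * ((x + (k:ℝ) * T : ℝ) : ℂ) / (T:ℂ)
          = 2 * (π:ℂ) * Complex.I * ((-ν : ℤ) : ℂ) * (x:ℂ) / (T:ℂ)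
            + ((-ν * k : ℤ) : ℂ) * (2 * (π:ℂ) * Complex.I) := by
        push_cast
        field_simp
        ring
      rw [harg, Complex.exp_add, Complex.exp_int_mul_two_pi_mul_I, mul_one]
    have he_cont : Continuous e := by fun_prop
    have hint : ∀ c : ℝ, Integrable (fun x => e x * h (x + c)) volume := fun c =>
      (htrans1 c).bdd_mul he_cont.aestronglyMeasurable (Eventually.of_forall fun x => (he_norm x).le)
    have hint' : Integrable (fun x => e x * h x) volume :=
      hh1.bdd_mul he_cont.aestronglyMeasurable (Eventually.of_forall fun x => (he_norm x).le)
    set aa : ℕ → ℝ := fun j => ((j:ℝ) - K) * T with ha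
    have hstep1 : (∫ x in (0:ℝ)..T, fourier (-ν) (x : AddCircle T) • H x)
        = ∑ i ∈ Finset.range nn, ∫ x in (0:ℝ)..T, e x * h (x + m i * T) := by
      rw [← intervalIntegral.integral_finset_sum
        (fun i _ => ((hint (m i * T)).intervalIntegrable))]
      refine intervalIntegral.integral_congr fun x _ => ?_
      rw [he_eq, smul_eq_mul]
      show e x * H x = _
      rw [hH, Finset.mul_sum]
    have hstep2 : ∀ i ∈ Finset.range nn, (∫ x in (0:ℝ)..T, e x * h (x + m i * T))
        = ∫ x in aa i..aa (i + 1), e x * h x := by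
      intro i _
      have hmi : m i * T = ((((i : ℤ) - (K : ℤ) : ℤ)) : ℝ) * T := by rw [hm]; push_cast; ring
      calc (∫ x in (0:ℝ)..T, e x * h (x + m i * T))
          = ∫ x in (0:ℝ)..T, (fun u => e u * h u) (x + m i * T) := by
            refine intervalIntegral.integral_congr fun x _ => ?_
            show e x * h (x + m i * T) = e (x + m i * T) * h (x + m i * T)
            conv_rhs => rw [hmi, he_per x ((i : ℤ) - (K : ℤ))]
            rw [hmi]
        _ = ∫ u in (0 + m i * T)..(T + m i * T), e u * h u := by
            exact intervalIntegral.integral_comp_add_right (fun u => e u * h u) (m i * T)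
        _ = ∫ x in aa i..aa (i + 1), e x * h x := by
            have h1 : 0 + m i * T = aa i := by rw [hm, ha]; ring
            have h2 : T + m i * T = aa (i + 1) := by rw [hm, ha]; push_cast; ring
            rw [h1, h2]
    have hstep3 : ∑ i ∈ Finset.range nn, ∫ x in aa i..aa (i + 1), e x * h x
        = ∫ x in (aa 0)..(aa nn), e x * h x :=
      intervalIntegral.sum_integral_adjacent_intervals fun i _ =>
        hint'.intervalIntegrable
    have hstep4 : ∫ x in (aa 0)..(aa nn), e x * h x = ∫ x, e x * h x := by
      refine intervalIntegral.integral_eq_integral_of_support_subset ?_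
      intro x hx
      have hxE : x ∈ E := by
        by_contra hxE
        have hg0 : g x = 0 := Set.indicator_of_notMem hxE f
        have : e x * h x = 0 := by
          show e x * (g x * _) = 0
          rw [hg0, zero_mul, mul_zero]
        exact hx this
      have hmem := hEsub hxE
      have hb1 : aa 0 = -((K:ℝ) * T) := by rw [ha]; push_cast; ring
      have hb2 : aa nn = ((K:ℝ) + 1) * T := by rw [ha, hnn]; push_cast; ring
      rw [hb1, hb2]
      exact ⟨hmem.1, hmem.2.trans (by nlinarith)⟩
    have hstep5 : ∫ x, e x * h x
        = ∫ t in E, f t * Complex.exp (-Complex.I * (t * ((y + 2 * ν * σ : ℝ) : ℂ))) := by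
      rw [← integral_indicator hE]
      refine integral_congr_ae (Eventually.of_forall fun x => ?_)
      by_cases hx : x ∈ E
      · rw [Set.indicator_of_mem hx]
        have hgx : g x = f x := Set.indicator_of_mem hx f
        show e x * (g x * Complex.exp (-Complex.I * ((x:ℂ) * (y:ℂ)))) = _
        rw [hgx, mul_left_comm, he, ← Complex.exp_add]
        congr 2
        rw [hTdef]
        have hπC : (π:ℂ) ≠ 0 := Complex.ofReal_ne_zero.2 Real.pi_ne_zero
        have hσC : (σ:ℂ) ≠ 0 := Complex.ofReal_ne_zero.2 hσ.ne'
        push_cast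
        field_simp
        ring
      · rw [Set.indicator_of_notMem hx]
        have hgx : g x = 0 := Set.indicator_of_notMem hx f
        show e x * (g x * _) = 0
        rw [hgx, zero_mul, mul_zero]
    rw [hstep1, Finset.sum_congr rfl hstep2, hstep3, hstep4, hstep5]
  have hcomp : ∀ ν : ℤ, fourierCoeff HL ν
      = (1 / T : ℝ) • ∫ t in E, f t * Complex.exp (-Complex.I * (t * ((y + 2 * ν * σ : ℝ) : ℂ))) := by
    intro ν
    rw [fourierCoeff_eq_intervalIntegral HL ν 0]
    rw [zero_add]
    congr 1
    rw [← hmain ν]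
    rw [intervalIntegral.integral_of_le hT.le, intervalIntegral.integral_of_le hT.le]
    refine setIntegral_congr_fun measurableSet_Ioc fun x hx => ?_
    rw [hHL, AddCircle.liftIoc_coe_apply (by simpa using hx)]
  -- Parseval right-hand side computations
  have hHLP_norm : ∫ t, ‖HLp t‖^2 ∂AddCircle.haarAddCircle
      = ∫ t, ‖HL t‖^2 ∂AddCircle.haarAddCircle :=
    integral_congr_ae (hcoe.mono fun x hx => by simp only [hx])
  have hIvol : ∫ t, ‖HL t‖^2 ∂(volume : Measure (AddCircle T))
      = T * ∫ t, ‖HL t‖^2 ∂AddCircle.haarAddCircle := by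
    rw [AddCircle.volume_eq_smul_haarAddCircle, integral_smul_measure,
      ENNReal.toReal_ofReal hT.le, smul_eq_mul]
  have hIIoc : ∫ t, ‖HL t‖^2 ∂(volume : Measure (AddCircle T))
      = ∫ x in Set.Ioc (0:ℝ) (0 + T), ‖H x‖^2 := by
    rw [← AddCircle.integral_preimage T 0 (fun t => ‖HL t‖^2)]
    refine setIntegral_congr_fun measurableSet_Ioc fun x hx => ?_
    rw [hHL, AddCircle.liftIoc_coe_apply hx]
  -- bound on the interval integral of ‖H‖²
  have hsq_int : ∀ c : ℝ, Integrable (fun x => ‖h (x + c)‖^2) volume := fun c =>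
    (memLp_two_iff_integrable_sq_norm (htrans2 c).1).1 (htrans2 c)
  have hHsq_int : Integrable (fun x => ‖H x‖^2) (volume.restrict (Set.Ioc (0:ℝ) (0+T))) :=
    (memLp_two_iff_integrable_sq_norm hHm.aestronglyMeasurable).1 (hH2.restrict _)
  have hIH_bound : ∫ x in Set.Ioc (0:ℝ) (0 + T), ‖H x‖^2 ≤ (nn:ℝ)^2 * ∫ x, ‖g x‖^2 := by
    have hbd : ∀ x : ℝ, ‖H x‖^2 ≤ (nn:ℝ) * ∑ i ∈ Finset.range nn, ‖h (x + m i * T)‖^2 := by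
      intro x
      have h1 : ‖H x‖ ≤ ∑ i ∈ Finset.range nn, ‖h (x + m i * T)‖ := norm_sum_le _ _
      have h2 : (∑ i ∈ Finset.range nn, ‖h (x + m i * T)‖)^2
          ≤ ((Finset.range nn).card : ℝ) * ∑ i ∈ Finset.range nn, ‖h (x + m i * T)‖^2 := by
        exact_mod_cast sq_sum_le_card_mul_sum_sq (s := Finset.range nn) (f := fun i => ‖h (x + m i * T)‖)
      rw [Finset.card_range] at h2
      calc ‖H x‖^2 ≤ (∑ i ∈ Finset.range nn, ‖h (x + m i * T)‖)^2 :=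
            pow_le_pow_left₀ (norm_nonneg _) h1 2
        _ ≤ _ := h2
    calc ∫ x in Set.Ioc (0:ℝ) (0+T), ‖H x‖^2
        ≤ ∫ x in Set.Ioc (0:ℝ) (0+T),
            (nn:ℝ) * ∑ i ∈ Finset.range nn, ‖h (x + m i * T)‖^2 := by
          refine integral_mono hHsq_int ?_ fun x => hbd x
          exact (((integrable_finset_sum _ fun i _ => hsq_int (m i * T)).const_mul _).restrict)
      _ = (nn:ℝ) * ∑ i ∈ Finset.range nn,
            ∫ x in Set.Ioc (0:ℝ) (0+T), ‖h (x + m i * T)‖^2 := by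
          rw [integral_const_mul, integral_finset_sum _
            (fun i _ => (hsq_int (m i * T)).restrict)]
      _ ≤ (nn:ℝ) * ∑ i ∈ Finset.range nn, ∫ x, ‖h (x + m i * T)‖^2 := by
          refine mul_le_mul_of_nonneg_left (Finset.sum_le_sum fun i _ => ?_) (by positivity)
          exact setIntegral_le_integral (hsq_int _)
            (Eventually.of_forall fun x => sq_nonneg _)
      _ = (nn:ℝ) * ∑ i ∈ Finset.range nn, ∫ x, ‖h x‖^2 := by
          congr 1
          refine Finset.sum_congr rfl fun i _ => ?_
          exact integral_add_right_eq_self (fun x : ℝ => ‖h x‖^2) (m i * T)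
      _ = (nn:ℝ)^2 * ∫ x, ‖h x‖^2 := by
          rw [Finset.sum_const, Finset.card_range, nsmul_eq_mul]; ring
      _ = (nn:ℝ)^2 * ∫ x, ‖g x‖^2 := by simp_rw [hnorm_h]
  -- collect: the sum of squared coefficients
  have hcsq : ∀ ν : ℤ,
      ‖fourierCoeff (⇑HLp) ν‖^2 = (1/T)^2
        * ‖∫ t in E, f t * Complex.exp (-Complex.I * (t * ((y + 2 * ν * σ : ℝ) : ℂ)))‖^2 := by
    intro ν
    rw [hcoeff_eq, hcomp, norm_smul, Real.norm_eq_abs, abs_of_pos (by positivity), mul_pow]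
  have hsumF : Summable fun ν : ℤ =>
      ‖∫ t in E, f t * Complex.exp (-Complex.I * (t * ((y + 2 * ν * σ : ℝ) : ℂ)))‖^2 := by
    have h4 := hsum_coeff.congr fun ν => hcsq ν
    have h5 := h4.mul_left (T^2)
    refine h5.congr fun ν => ?_
    rw [← mul_assoc, ← mul_pow, mul_one_div_cancel hT.ne', one_pow, one_mul]
  have htsum :
      (∑' ν : ℤ, ‖∫ t in E, f t * Complex.exp (-Complex.I * (t * ((y + 2 * ν * σ : ℝ) : ℂ)))‖^2)
        ≤ T * ((nn:ℝ)^2 * ∫ x, ‖g x‖^2) := by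
    have h6 : ∑' ν : ℤ, ‖fourierCoeff (⇑HLp) ν‖^2
        = (1/T)^2 * ∑' ν : ℤ,
          ‖∫ t in E, f t * Complex.exp (-Complex.I * (t * ((y + 2 * ν * σ : ℝ) : ℂ)))‖^2 := by
      simp_rw [hcsq]; exact tsum_mul_left
    rw [h6] at hpars
    have h7 : T * ∫ t, ‖HLp t‖^2 ∂AddCircle.haarAddCircle ≤ (nn:ℝ)^2 * ∫ x, ‖g x‖^2 := by
      rw [hHLP_norm, ← hIvol, hIIoc]
      exact hIH_bound
    have hS : (∑' ν : ℤ, ‖∫ t in E, f t * Complex.exp (-Complex.I * (t * ((y + 2 * ν * σ : ℝ) : ℂ)))‖^2)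
        = T^2 * ∫ t, ‖HLp t‖^2 ∂AddCircle.haarAddCircle := by
      have h8 := congrArg (fun z : ℝ => T^2 * z) hpars
      rw [← h8]
      rw [← mul_assoc, ← mul_pow, mul_one_div_cancel hT.ne', one_pow, one_mul]
    calc (∑' ν : ℤ, ‖∫ t in E, f t * Complex.exp (-Complex.I * (t * ((y + 2 * ν * σ : ℝ) : ℂ)))‖^2)
        = T * (T * ∫ t, ‖HLp t‖^2 ∂AddCircle.haarAddCircle) := by rw [hS]; ring
      _ ≤ T * ((nn:ℝ)^2 * ∫ x, ‖g x‖^2) := mul_le_mul_of_nonneg_left h7 hT.le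
  -- conclude in ℝ≥0∞
  calc (∑' ν : ℤ,
        (‖∫ t in E, f t * Complex.exp (-Complex.I * (t * ((y + 2 * ν * σ : ℝ) : ℂ)))‖₊ : ℝ≥0∞) ^ 2)
      = ENNReal.ofReal (∑' ν : ℤ,
          ‖∫ t in E, f t * Complex.exp (-Complex.I * (t * ((y + 2 * ν * σ : ℝ) : ℂ)))‖^2) := by
        rw [ENNReal.ofReal_tsum_of_nonneg (fun ν => sq_nonneg _) hsumF]
        congr 1
        funext ν
        rw [ENNReal.ofReal_pow (norm_nonneg _), ofReal_norm_eq_enorm, enorm_eq_nnnorm]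
    _ ≤ ENNReal.ofReal (T * ((nn:ℝ) ^ 2 * ∫ x, ‖g x‖ ^ 2)) :=
        ENNReal.ofReal_le_ofReal htsum


end S19

/-- for every bounded measurable `E ⊆ ℝ`,
`∫_{-σ}^{σ} |∫_E f conj(Φ(·,y))|² dy ≤ ‖D_{B,σ}‖_∞ ∫_ℝ |∫_E f(t) e^{-iyt} dt|² dy`. -/
theorem stmt19 (σ : ℝ) (hσ : 0 < σ) (f : ℝ → ℂ) (hf : MemLp f 2 volume)
    (Bhat : ℝ → ℂ)
    (hD : MemLp (fun y => Dfun Bhat σ y) ⊤ (volume.restrict (Set.Ioc (-σ) σ)))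
    (Φ : ℝ → ℝ → ℂ) (hΦ : IsPhiHat Bhat σ Φ) :
    ∀ E : Set ℝ, MeasurableSet E → Bornology.IsBounded E →
      (∫ y in Set.Ioc (-σ) σ, ‖∫ t in E, f t * (starRingEnd ℂ) (Φ t y)‖ ^ 2)
        ≤ (eLpNorm (fun y => Dfun Bhat σ y) ⊤
            (volume.restrict (Set.Ioc (-σ) σ))).toReal *
          ∫ y : ℝ, ‖∫ t in E, f t * Complex.exp (-Complex.I * (t * y))‖ ^ 2 := by
  intro E hE hEb
  -- replace f by a strongly measurable representative
  obtain ⟨f', hf'm, hff'⟩ : ∃ f', StronglyMeasurable f' ∧ f =ᵐ[volume] f' :=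
    ⟨hf.1.mk f, hf.1.stronglyMeasurable_mk, hf.1.ae_eq_mk⟩
  have hf2 : MemLp f' 2 volume :=
    ⟨hf'm.aestronglyMeasurable, by rw [← eLpNorm_congr_ae hff']; exact hf.2⟩
  have hrw1 : ∀ y : ℝ, (∫ t in E, f t * (starRingEnd ℂ) (Φ t y))
      = ∫ t in E, f' t * (starRingEnd ℂ) (Φ t y) := fun y =>
    integral_congr_ae (ae_restrict_of_ae (hff'.mono fun t ht => by simp only [ht]))
  have hrw2 : ∀ y : ℝ, (∫ t in E, f t * Complex.exp (-Complex.I * (t * y)))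
      = ∫ t in E, f' t * Complex.exp (-Complex.I * (t * y)) := fun y =>
    integral_congr_ae (ae_restrict_of_ae (hff'.mono fun t ht => by simp only [ht]))
  simp only [hrw1, hrw2]
  haveI : IsFiniteMeasure (volume.restrict E) :=
    ⟨by rw [Measure.restrict_apply_univ]; exact hEb.measure_lt_top⟩
  have hfE1 : Integrable f' (volume.restrict E) := (hf2.restrict E).integrable one_le_two
  set F : ℝ → ℂ := fun z => ∫ t in E, f' t * Complex.exp (-Complex.I * (t * z)) with hF
  have hFcont : Continuous F := by
    refine continuous_of_dominated (μ := volume.restrict E)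
      (F := fun (z : ℝ) (t : ℝ) => f' t * Complex.exp (-Complex.I * (t * (z : ℂ))))
      (bound := fun t => ‖f' t‖) ?_ ?_ ?_ ?_
    · exact fun z => (hf'm.mul (Continuous.stronglyMeasurable
        (by fun_prop))).aestronglyMeasurable
    · intro z
      refine Eventually.of_forall fun t => ?_
      rw [norm_mul, S19.norm_exp_eq_one (by simp), mul_one]
    · exact hfE1.norm
    · exact Eventually.of_forall fun t => by fun_prop
  set G : ℝ → ℝ≥0∞ := fun z => ∑' ν : ℤ, (‖F (z + 2 * ν * σ)‖₊ : ℝ≥0∞) ^ 2 with hG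
  have hGmeas : Measurable G := by
    refine Measurable.ennreal_tsum fun ν => ?_
    exact ((hFcont.measurable.comp (measurable_add_const _)).nnnorm.coe_nnreal_ennreal).pow_const 2
  obtain ⟨C₀, hC₀top, hC₀⟩ := S19.bessel_bound hσ hf'm hf2 hE hEb
  have hGle : ∀ z, G z ≤ C₀ := fun z => hC₀ z
  have hGlt : ∀ z, G z < ⊤ := fun z => lt_of_le_of_lt (hGle z) (lt_top_iff_ne_top.2 hC₀top)
  have hper : ∫⁻ z in Set.Ioc (-σ) σ, G z = ∫⁻ z, (‖F z‖₊ : ℝ≥0∞) ^ 2 :=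
    S19.periodize hσ ((hFcont.measurable.nnnorm.coe_nnreal_ennreal).pow_const 2)
  have hIocFin : ∫⁻ z in Set.Ioc (-σ) σ, G z < ⊤ := by
    calc ∫⁻ z in Set.Ioc (-σ) σ, G z ≤ ∫⁻ _ in Set.Ioc (-σ) σ, C₀ :=
          lintegral_mono fun z => hGle z
      _ = C₀ * volume (Set.Ioc (-σ) σ) := by rw [setLIntegral_const]
      _ < ⊤ := ENNReal.mul_lt_top (lt_top_iff_ne_top.2 hC₀top) measure_Ioc_lt_top
  have hRHS : ∫ z, ‖F z‖ ^ 2 = (∫⁻ z, (‖F z‖₊ : ℝ≥0∞) ^ 2).toReal := by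
    rw [integral_eq_lintegral_of_nonneg_ae (Eventually.of_forall fun z => sq_nonneg _)
      ((hFcont.norm.pow 2).aestronglyMeasurable)]
    congr 1
    refine lintegral_congr fun z => ?_
    rw [ENNReal.ofReal_pow (norm_nonneg _), ofReal_norm_eq_enorm, enorm_eq_nnnorm]
  set Kc := (eLpNorm (fun y => Dfun Bhat σ y) ⊤ (volume.restrict (Set.Ioc (-σ) σ))).toReal
    with hKc
  have hKc0 : 0 ≤ Kc := ENNReal.toReal_nonneg
  have haeD : ∀ᵐ y ∂(volume.restrict (Set.Ioc (-σ) σ)), Dfun Bhat σ y ≤ Kc := by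
    have h1 := ae_le_eLpNormEssSup (f := fun y => Dfun Bhat σ y)
      (μ := volume.restrict (Set.Ioc (-σ) σ))
    refine h1.mono fun y hy => ?_
    calc Dfun Bhat σ y ≤ ‖Dfun Bhat σ y‖ := by rw [Real.norm_eq_abs]; exact le_abs_self _
      _ = ((‖Dfun Bhat σ y‖₊ : ℝ≥0∞)).toReal := by simp
      _ ≤ Kc := by
          rw [hKc, eLpNorm_exponent_top]
          exact ENNReal.toReal_mono
            (by rw [← eLpNorm_exponent_top]; exact hD.2.ne) (by exact_mod_cast hy)
  have haeΦ : ∀ᵐ y : ℝ, ∀ᵐ t : ℝ, HasSum (fun ν : ℤ =>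
      Bhat (y + 2 * ν * σ) * Complex.exp (Complex.I * ((y + 2 * ν * σ) * t))) (Φ t y) := by
    have hΦ' : ∀ᵐ p : ℝ × ℝ ∂((volume : Measure ℝ).prod volume), HasSum (fun ν : ℤ =>
        Bhat (p.2 + 2 * ν * σ) * Complex.exp (Complex.I * ((p.2 + 2 * ν * σ) * p.1)))
        (Φ p.1 p.2) := by
      rw [← Measure.volume_eq_prod]; exact hΦ
    have h2 : ∀ᵐ q : ℝ × ℝ ∂((volume : Measure ℝ).prod volume), HasSum (fun ν : ℤ =>
        Bhat (q.1 + 2 * ν * σ) * Complex.exp (Complex.I * ((q.1 + 2 * ν * σ) * q.2)))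
        (Φ q.2 q.1) := by
      refine ((Measure.measurePreserving_swap).quasiMeasurePreserving.tendsto_ae.eventually
        hΦ').mono fun q hq => ?_
      exact hq
    exact Measure.ae_ae_of_ae_prod h2
  have haeMain : ∀ᵐ y ∂(volume.restrict (Set.Ioc (-σ) σ)),
      ‖∫ t in E, f' t * (starRingEnd ℂ) (Φ t y)‖ ^ 2 ≤ Kc * (G y).toReal := by
    filter_upwards [haeD, ae_restrict_of_ae haeΦ] with y hyD hyΦ
    have hsumc : Summable fun ν : ℤ => ‖Bhat (y + 2 * ν * σ)‖ := S19.summable_coef hyΦ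
    have hsumc2 : Summable fun ν : ℤ => ‖Bhat (y + 2 * ν * σ)‖ ^ 2 := by
      refine Summable.of_nonneg_of_le (fun ν => sq_nonneg _) (fun ν => ?_)
        (hsumc.mul_left (∑' μ : ℤ, ‖Bhat (y + 2 * μ * σ)‖))
      have h1 : ‖Bhat (y + 2 * ν * σ)‖ ≤ ∑' μ : ℤ, ‖Bhat (y + 2 * μ * σ)‖ :=
        Summable.le_tsum hsumc ν fun μ _ => norm_nonneg _
      calc ‖Bhat (y + 2 * ν * σ)‖ ^ 2
          = ‖Bhat (y + 2 * ν * σ)‖ * ‖Bhat (y + 2 * ν * σ)‖ := sq _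
        _ ≤ (∑' μ : ℤ, ‖Bhat (y + 2 * μ * σ)‖) * ‖Bhat (y + 2 * ν * σ)‖ :=
            mul_le_mul_of_nonneg_right h1 (norm_nonneg _)
    have hGfin : G y ≠ ⊤ := (hGlt y).ne
    have hsumF2 : Summable fun ν : ℤ => ‖F (y + 2 * ν * σ)‖ ^ 2 := by
      have h1 := ENNReal.summable_toReal hGfin
      refine h1.congr fun ν => ?_
      rw [ENNReal.toReal_pow, ENNReal.coe_toReal, coe_nnnorm]
    have hGtoReal : (G y).toReal = ∑' ν : ℤ, ‖F (y + 2 * ν * σ)‖ ^ 2 := by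
      rw [hG]
      rw [ENNReal.tsum_toReal_eq fun ν => ENNReal.pow_ne_top ENNReal.coe_ne_top]
      refine tsum_congr fun ν => ?_
      rw [ENNReal.toReal_pow, ENNReal.coe_toReal, coe_nnnorm]
    -- interchange integral and sum
    have hPt : ∀ᵐ t ∂(volume.restrict E), f' t * (starRingEnd ℂ) (Φ t y)
        = ∑' ν : ℤ, f' t * ((starRingEnd ℂ) (Bhat (y + 2 * ν * σ))
            * Complex.exp (-Complex.I * (t * ((y + 2 * ν * σ : ℝ) : ℂ)))) := by
      refine ae_restrict_of_ae (hyΦ.mono fun t ht => ?_)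
      have h1 : HasSum (fun ν : ℤ => (starRingEnd ℂ) (Bhat (y + 2 * ν * σ)
          * Complex.exp (Complex.I * ((y + 2 * ν * σ) * t)))) ((starRingEnd ℂ) (Φ t y)) :=
        ht.map (starRingEnd ℂ) (Complex.continuous_conj)
      have h2 := ((h1.mul_left (f' t)).tsum_eq).symm
      refine h2.trans (tsum_congr fun ν => ?_)
      congr 1
      rw [map_mul]
      congr 1
      rw [← Complex.exp_conj]
      congr 1
      simp only [map_mul, map_add, map_intCast, Complex.conj_I, Complex.conj_ofReal, map_ofNat]
      push_cast
      ring
    have hmeas_terms : ∀ ν : ℤ, AEStronglyMeasurable (fun t : ℝ => f' t *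
        ((starRingEnd ℂ) (Bhat (y + 2 * ν * σ))
          * Complex.exp (-Complex.I * (t * ((y + 2 * ν * σ : ℝ) : ℂ))))) (volume.restrict E) :=
      fun ν => (hf'm.mul (Continuous.stronglyMeasurable
        (by fun_prop))).aestronglyMeasurable
    have hlint : (∑' ν : ℤ, ∫⁻ t, ‖f' t * ((starRingEnd ℂ) (Bhat (y + 2 * ν * σ))
        * Complex.exp (-Complex.I * (t * ((y + 2 * ν * σ : ℝ) : ℂ))))‖₊ ∂(volume.restrict E)) ≠ ⊤ := by
      have heach : ∀ ν : ℤ, (∫⁻ t, ‖f' t * ((starRingEnd ℂ) (Bhat (y + 2 * ν * σ))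
          * Complex.exp (-Complex.I * (t * ((y + 2 * ν * σ : ℝ) : ℂ))))‖₊ ∂(volume.restrict E))
          = (‖Bhat (y + 2 * ν * σ)‖₊ : ℝ≥0∞) * ∫⁻ t, ‖f' t‖₊ ∂(volume.restrict E) := by
        intro ν
        rw [← lintegral_const_mul' _ _ ENNReal.coe_ne_top]
        refine lintegral_congr fun t => ?_
        have hc : ‖Complex.exp (-Complex.I * ((t : ℂ) * ((y + 2 * ν * σ : ℝ) : ℂ)))‖₊ = 1 := by
          refine NNReal.coe_injective ?_
          simpa using S19.norm_exp_eq_one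
            (show (-Complex.I * ((t : ℂ) * ((y + 2 * ν * σ : ℝ) : ℂ))).re = 0 by simp)
        rw [nnnorm_mul, nnnorm_mul, hc, mul_one, RCLike.nnnorm_conj]
        push_cast
        ring
      rw [tsum_congr heach, ENNReal.tsum_mul_right]
      refine ENNReal.mul_ne_top ?_ hfE1.2.ne
      rw [ENNReal.tsum_coe_ne_top_iff_summable]
      have : Summable fun ν : ℤ => ‖Bhat (y + 2 * ν * σ)‖₊ := by
        rw [← NNReal.summable_coe]
        exact hsumc.congr fun ν => by rw [coe_nnnorm]
      exact this
    have hInt : ∫ t in E, f' t * (starRingEnd ℂ) (Φ t y)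
        = ∑' ν : ℤ, (starRingEnd ℂ) (Bhat (y + 2 * ν * σ)) * F (y + 2 * ν * σ) := by
      rw [integral_congr_ae hPt, integral_tsum hmeas_terms hlint]
      refine tsum_congr fun ν => ?_
      rw [show (fun t : ℝ => f' t * ((starRingEnd ℂ) (Bhat (y + 2 * ν * σ))
          * Complex.exp (-Complex.I * (t * ((y + 2 * ν * σ : ℝ) : ℂ)))))
          = fun t : ℝ => (starRingEnd ℂ) (Bhat (y + 2 * ν * σ))
            * (f' t * Complex.exp (-Complex.I * (t * ((y + 2 * ν * σ : ℝ) : ℂ))))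
        from funext fun t => by ring]
      rw [integral_const_mul]
    obtain ⟨hsum_ab, hCS⟩ := S19.tsum_cauchy_schwarz
      (fun ν : ℤ => norm_nonneg (Bhat (y + 2 * ν * σ)))
      (fun ν : ℤ => norm_nonneg (F (y + 2 * ν * σ))) hsumc2 hsumF2
    have hsum_terms : Summable fun ν : ℤ =>
        ‖(starRingEnd ℂ) (Bhat (y + 2 * ν * σ)) * F (y + 2 * ν * σ)‖ := by
      refine hsum_ab.congr fun ν => ?_
      rw [norm_mul, RCLike.norm_conj]
    have hnorm1 : ‖∫ t in E, f' t * (starRingEnd ℂ) (Φ t y)‖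
        ≤ ∑' ν : ℤ, ‖Bhat (y + 2 * ν * σ)‖ * ‖F (y + 2 * ν * σ)‖ := by
      rw [hInt]
      refine (norm_tsum_le_tsum_norm hsum_terms).trans_eq ?_
      refine tsum_congr fun ν => ?_
      rw [norm_mul, RCLike.norm_conj]
    calc ‖∫ t in E, f' t * (starRingEnd ℂ) (Φ t y)‖ ^ 2
        ≤ (∑' ν : ℤ, ‖Bhat (y + 2 * ν * σ)‖ * ‖F (y + 2 * ν * σ)‖) ^ 2 :=
          pow_le_pow_left₀ (norm_nonneg _) hnorm1 2
      _ ≤ (∑' ν : ℤ, ‖Bhat (y + 2 * ν * σ)‖ ^ 2) * ∑' ν : ℤ, ‖F (y + 2 * ν * σ)‖ ^ 2 := hCS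
      _ = Dfun Bhat σ y * (G y).toReal := by rw [hGtoReal]; rfl
      _ ≤ Kc * (G y).toReal := mul_le_mul_of_nonneg_right hyD ENNReal.toReal_nonneg
  have hGInt : Integrable (fun y => (G y).toReal) (volume.restrict (Set.Ioc (-σ) σ)) :=
    integrable_toReal_of_lintegral_ne_top (hGmeas.aemeasurable.restrict) hIocFin.ne
  by_cases hLI : Integrable (fun y => ‖∫ t in E, f' t * (starRingEnd ℂ) (Φ t y)‖ ^ 2)
      (volume.restrict (Set.Ioc (-σ) σ))
  · calc (∫ y in Set.Ioc (-σ) σ, ‖∫ t in E, f' t * (starRingEnd ℂ) (Φ t y)‖ ^ 2)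
        ≤ ∫ y in Set.Ioc (-σ) σ, Kc * (G y).toReal :=
          integral_mono_ae hLI (hGInt.const_mul Kc) haeMain
      _ = Kc * ∫ y in Set.Ioc (-σ) σ, (G y).toReal := integral_const_mul Kc _
      _ = Kc * (∫⁻ y in Set.Ioc (-σ) σ, G y).toReal := by
          rw [integral_toReal (hGmeas.aemeasurable.restrict)
            (Eventually.of_forall fun y => hGlt y)]
      _ = Kc * (∫⁻ z, (‖F z‖₊ : ℝ≥0∞) ^ 2).toReal := by rw [hper]
      _ = Kc * ∫ z, ‖F z‖ ^ 2 := by rw [hRHS]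
  · rw [integral_undef hLI]
    exact mul_nonneg hKc0 (integral_nonneg fun z => sq_nonneg _)
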